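/- Suppose V ∈ B_s with s > n/2 on R^n. Then there exists a constant C such that for all x ∈ R^n and all 0 < r < R < ∞, (1/r^{n-2}) ∫_{B(x,r)} V(y) dy ≤ C (R/r)^{n/s - 2} · (1/R^{n-2}) ∫_{B(x,R)} V(y) dy. -/
import Mathlib


open MeasureTheory Metric Set ENNReal
noncomputable section

/-- The dyadic annulus `E_k = B(x₀, 2^k r) \ B(x₀, 2^(k-1) r)`. -/
def Ann (n : ℕ) (x0 : EuclideanSpace ℝ (Fin n)) (r : ℝ) (k : ℤ) :
    Set (EuclideanSpace ℝ (Fin n)) :=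
  Metric.ball x0 ((2 : ℝ) ^ k * r) \ Metric.ball x0 ((2 : ℝ) ^ (k - 1) * r)

/-- The `L^p` norm of `f` on a set `s` (with exponent `p` a real number). -/
def lpOn (n : ℕ) (f : EuclideanSpace ℝ (Fin n) → ℝ) (p : ℝ)
    (s : Set (EuclideanSpace ℝ (Fin n))) : ℝ≥0∞ :=
  (∫⁻ x in s, (ENNReal.ofReal |f x|) ^ p) ^ (1 / p)

/-- The `L^p(ℝⁿ)` norm of `f`. -/
def lpNorm (n : ℕ) (f : EuclideanSpace ℝ (Fin n) → ℝ) (p : ℝ) : ℝ≥0∞ :=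
  lpOn n f p Set.univ

/-- The `q`-th power of the generalized Morrey norm `‖f‖_{L^{p,q,λ}_{α,θ,V}}`. -/
def morreyQ (n : ℕ) (mV : EuclideanSpace ℝ (Fin n) → ℝ) (p q lam alpha theta : ℝ)
    (f : EuclideanSpace ℝ (Fin n) → ℝ) : ℝ≥0∞ :=
  ⨆ (x0 : EuclideanSpace ℝ (Fin n)) (r : ℝ) (_ : 0 < r),
    ENNReal.ofReal ((1 + r * mV x0) ^ alpha * r ^ (-(lam * n))) *
      ∑' k : ℕ, (volume (Ann n x0 r (-(k : ℤ)))) ^ (theta * q) *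
        (lpOn n f p (Ann n x0 r (-(k : ℤ)))) ^ q

/-- The generalized Morrey norm. -/
def morreyNorm (n : ℕ) (mV : EuclideanSpace ℝ (Fin n) → ℝ) (p q lam alpha theta : ℝ)
    (f : EuclideanSpace ℝ (Fin n) → ℝ) : ℝ≥0∞ :=
  (morreyQ n mV p q lam alpha theta f) ^ (1 / q)

/-- `V` belongs to the reverse Hölder class `B_s`. -/
def ReverseHolder (n : ℕ) (V : EuclideanSpace ℝ (Fin n) → ℝ) (s : ℝ) : Prop :=
  ∃ C > (0 : ℝ), ∀ (x : EuclideanSpace ℝ (Fin n)) (r : ℝ), 0 < r →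
    ((volume (Metric.ball x r))⁻¹ *
        ∫⁻ y in Metric.ball x r, (ENNReal.ofReal (V y)) ^ s) ^ (1 / s) ≤
      ENNReal.ofReal C *
        ((volume (Metric.ball x r))⁻¹ * ∫⁻ y in Metric.ball x r, ENNReal.ofReal (V y))

/-- The auxiliary function `m_V` of Shen. -/
def auxm (n : ℕ) (V : EuclideanSpace ℝ (Fin n) → ℝ) (x : EuclideanSpace ℝ (Fin n)) : ℝ :=
  (sSup {r : ℝ | 0 < r ∧
      ∫⁻ y in Metric.ball x r, ENNReal.ofReal (V y) ≤ ENNReal.ofReal (r ^ ((n : ℝ) - 2))})⁻¹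

/-- The BMO seminorm of `b`. -/
def bmoNorm (n : ℕ) (b : EuclideanSpace ℝ (Fin n) → ℝ) : ℝ≥0∞ :=
  ⨆ (x : EuclideanSpace ℝ (Fin n)) (r : ℝ) (_ : 0 < r),
    (volume (Metric.ball x r))⁻¹ *
      ∫⁻ y in Metric.ball x r, ENNReal.ofReal |b y - ⨍ z in Metric.ball x r, b z|

/-- The fractional Hardy–Littlewood maximal function `M_{σ,γ}`. -/
def fracMax (n : ℕ) (sigma gam : ℝ) (f : EuclideanSpace ℝ (Fin n) → ℝ)
    (x : EuclideanSpace ℝ (Fin n)) : ℝ≥0∞ :=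
  ⨆ (z : EuclideanSpace ℝ (Fin n)) (ρ : ℝ) (_ : 0 < ρ) (_ : x ∈ Metric.ball z ρ),
    ((volume (Metric.ball z ρ)) ^ (-(1 - sigma * gam / n)) *
      ∫⁻ y in Metric.ball z ρ, (ENNReal.ofReal |f y|) ^ gam) ^ (1 / gam)

theorem holder_one {α : Type*} [MeasurableSpace α] (μ : Measure α) (f : α → ℝ≥0∞)
    (s : ℝ) (hs : 1 < s) :
    ∫⁻ x, f x ∂μ ≤ (∫⁻ x, f x ^ s ∂μ) ^ (1/s) * (μ univ) ^ (1 - 1/s) := by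
  have hpq : Real.HolderConjugate s (Real.conjExponent s) := Real.HolderConjugate.conjExponent hs
  have hq : 1 / Real.conjExponent s = 1 - 1/s := by
    have := hpq.inv_add_inv_eq_one
    rw [one_div, one_div]
    linarith
  rw [MeasureTheory.lintegral_def]
  refine iSup₂_le fun g hg => ?_
  rw [← SimpleFunc.lintegral_eq_lintegral]
  have H := ENNReal.lintegral_mul_le_Lp_mul_Lq μ hpq g.measurable.aemeasurable
      (aemeasurable_const (b := (1 : ℝ≥0∞)))
  simp only [Pi.mul_apply, mul_one, ENNReal.one_rpow, lintegral_const, one_mul, hq] at H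
  refine H.trans ?_
  gcongr with x
  exacts [hg x]

theorem real_calc (n : ℕ) (r R s : ℝ) (hr : 0 < r) (hR : 0 < R) (hs : 0 < s) :
    r ^ (2 - (n:ℝ)) * ((R ^ n) ^ (1/s) * ((R ^ n : ℝ)⁻¹ * (r ^ n) ^ (1 - 1/s))) =
    (R / r) ^ ((n:ℝ)/s - 2) * R ^ (2 - (n:ℝ)) := by
  rw [← Real.rpow_natCast R n, ← Real.rpow_natCast r n, ← Real.rpow_neg hR.le,
      ← Real.rpow_mul hR.le, ← Real.rpow_mul hr.le, Real.div_rpow hR.le hr.le,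
      div_eq_mul_inv _ (r ^ _), ← Real.rpow_neg hr.le]
  simp only [Real.rpow_def_of_pos hr, Real.rpow_def_of_pos hR, ← Real.exp_add]
  rw [Real.exp_eq_exp]
  ring


/-- Shen's Lemma 1.2 comparing averages of `V` at two scales. -/
theorem reverseHolder_scale_compare (n : ℕ) (hn : 3 ≤ n)
    (V : EuclideanSpace ℝ (Fin n) → ℝ) (hV : ∀ x, 0 ≤ V x)
    (s : ℝ) (hs : (n : ℝ) / 2 < s)
    (hRH : ReverseHolder n V s) :
    ∃ C > (0 : ℝ), ∀ (x : EuclideanSpace ℝ (Fin n)) (r R : ℝ), 0 < r → r < R →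
      ENNReal.ofReal (r ^ (2 - (n : ℝ))) * ∫⁻ y in Metric.ball x r, ENNReal.ofReal (V y) ≤
        ENNReal.ofReal (C * (R / r) ^ ((n : ℝ) / s - 2) * R ^ (2 - (n : ℝ))) *
          ∫⁻ y in Metric.ball x R, ENNReal.ofReal (V y) := by
  obtain ⟨C, hC, hRH⟩ := hRH
  refine ⟨C, hC, fun x r R hr hrR => ?_⟩
  haveI : Nontrivial (EuclideanSpace ℝ (Fin n)) :=
    Module.nontrivial_of_finrank_pos (R := ℝ)
      (by rw [finrank_euclideanSpace_fin]; omega)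
  have hR : 0 < R := hr.trans hrR
  have hn' : (3:ℝ) ≤ (n:ℝ) := by exact_mod_cast hn
  have hs1 : 1 < s := by nlinarith
  have hs0 : 0 < s := lt_trans one_pos hs1
  set μr := volume (Metric.ball x r) with hμr
  set μR := volume (Metric.ball x R) with hμR
  have hμr0 : μr ≠ 0 := (measure_ball_pos volume x hr).ne'
  have hμrt : μr ≠ ∞ := measure_ball_lt_top.ne
  have hμR0 : μR ≠ 0 := (measure_ball_pos volume x hR).ne'
  have hμRt : μR ≠ ∞ := measure_ball_lt_top.ne
  set Ir := ∫⁻ y in Metric.ball x r, ENNReal.ofReal (V y) with hIr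
  set IR := ∫⁻ y in Metric.ball x R, ENNReal.ofReal (V y) with hIR
  set JR := ∫⁻ y in Metric.ball x R, (ENNReal.ofReal (V y)) ^ s with hJR
  -- Step 1 : Hölder
  have h1 : Ir ≤ JR ^ (1/s) * μr ^ (1 - 1/s) := by
    have H := holder_one (volume.restrict (Metric.ball x r))
      (fun y => ENNReal.ofReal (V y)) s hs1
    rw [Measure.restrict_apply_univ] at H
    refine H.trans ?_
    gcongr
    exact lintegral_mono_set (Metric.ball_subset_ball hrR.le)
  -- Step 2 : reverse Hölder at scale R
  have h2 : JR ^ (1/s) ≤ ENNReal.ofReal C * (μR ^ (1/s) * (μR⁻¹ * IR)) := by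
    have H := hRH x R hR
    rw [ENNReal.mul_rpow_of_nonneg _ _ (one_div_nonneg.mpr hs0.le)] at H
    have key : μR ^ (1/s) * (μR⁻¹ ^ (1/s) * JR ^ (1/s)) = JR ^ (1/s) := by
      rw [← mul_assoc, ← ENNReal.mul_rpow_of_nonneg _ _ (one_div_nonneg.mpr hs0.le),
        ENNReal.mul_inv_cancel hμR0 hμRt, ENNReal.one_rpow, one_mul]
    calc JR ^ (1/s) = μR ^ (1/s) * (μR⁻¹ ^ (1/s) * JR ^ (1/s)) := key.symm
      _ ≤ μR ^ (1/s) * (ENNReal.ofReal C * (μR⁻¹ * IR)) := by gcongr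
      _ = ENNReal.ofReal C * (μR ^ (1/s) * (μR⁻¹ * IR)) := by ring
  -- volumes
  have hvr : μr = ENNReal.ofReal (r ^ n) * volume (Metric.ball (0 : EuclideanSpace ℝ (Fin n)) 1) := by
    rw [hμr, Measure.addHaar_ball volume x hr.le, finrank_euclideanSpace_fin]
  have hvR : μR = ENNReal.ofReal (R ^ n) * volume (Metric.ball (0 : EuclideanSpace ℝ (Fin n)) 1) := by
    rw [hμR, Measure.addHaar_ball volume x hR.le, finrank_euclideanSpace_fin]
  set c := volume (Metric.ball (0 : EuclideanSpace ℝ (Fin n)) 1) with hc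
  have hc0 : c ≠ 0 := (measure_ball_pos volume _ one_pos).ne'
  have hct : c ≠ ∞ := measure_ball_lt_top.ne
  have hrn0 : (ENNReal.ofReal (r ^ n)) ≠ 0 := by
    simp [ENNReal.ofReal_eq_zero, not_le, pow_pos hr]
  have hRn0 : (ENNReal.ofReal (R ^ n)) ≠ 0 := by
    simp [ENNReal.ofReal_eq_zero, not_le, pow_pos hR]
  -- the key constant computation
  have hK : ENNReal.ofReal (r ^ (2 - (n : ℝ))) *
      (ENNReal.ofReal C * (μR ^ (1/s) * (μR⁻¹ * μr ^ (1 - 1/s)))) =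
      ENNReal.ofReal (C * (R / r) ^ ((n : ℝ) / s - 2) * R ^ (2 - (n : ℝ))) := by
    rw [hvr, hvR,
      ENNReal.mul_rpow_of_ne_zero hRn0 hc0,
      ENNReal.mul_rpow_of_ne_zero hrn0 hc0,
      ENNReal.mul_inv (Or.inl hRn0) (Or.inl ENNReal.ofReal_ne_top),
      ENNReal.ofReal_rpow_of_pos (pow_pos hR n),
      ENNReal.ofReal_rpow_of_pos (pow_pos hr n),
      ← ENNReal.ofReal_inv_of_pos (pow_pos hR n)]
    have hcc : c ^ (1/s) * (c⁻¹ * c ^ (1 - 1/s)) = 1 := by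
      rw [← mul_assoc, mul_comm (c ^ (1/s)) c⁻¹, mul_assoc,
        ← ENNReal.rpow_add _ _ hc0 hct,
        show 1/s + (1 - 1/s) = 1 from by ring, ENNReal.rpow_one]
      exact ENNReal.inv_mul_cancel hc0 hct
    calc ENNReal.ofReal (r ^ (2 - (n : ℝ))) *
        (ENNReal.ofReal C * (ENNReal.ofReal ((R ^ n) ^ (1/s)) * c ^ (1/s) *
          (ENNReal.ofReal ((R ^ n : ℝ)⁻¹) * c⁻¹ *
            (ENNReal.ofReal ((r ^ n) ^ (1 - 1/s)) * c ^ (1 - 1/s)))))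
        = ENNReal.ofReal C * (ENNReal.ofReal (r ^ (2 - (n : ℝ))) *
            (ENNReal.ofReal ((R ^ n) ^ (1/s)) *
              (ENNReal.ofReal ((R ^ n : ℝ)⁻¹) * ENNReal.ofReal ((r ^ n) ^ (1 - 1/s))))) *
            (c ^ (1/s) * (c⁻¹ * c ^ (1 - 1/s))) := by ring
      _ = ENNReal.ofReal (C * (r ^ (2 - (n : ℝ)) *
            ((R ^ n) ^ (1/s) * ((R ^ n : ℝ)⁻¹ * (r ^ n) ^ (1 - 1/s))))) := by
          rw [hcc, mul_one, ← ENNReal.ofReal_mul (p := ((R ^ n : ℝ)⁻¹)) (by positivity),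
            ← ENNReal.ofReal_mul (p := ((R ^ n : ℝ) ^ (1/s))) (by positivity),
            ← ENNReal.ofReal_mul (p := (r ^ (2 - (n:ℝ)))) (by positivity),
            ← ENNReal.ofReal_mul hC.le]
      _ = _ := by
          congr 1
          rw [real_calc n r R s hr hR hs0]
          ring
  calc ENNReal.ofReal (r ^ (2 - (n : ℝ))) * Ir
      ≤ ENNReal.ofReal (r ^ (2 - (n : ℝ))) *
          ((ENNReal.ofReal C * (μR ^ (1/s) * (μR⁻¹ * IR))) * μr ^ (1 - 1/s)) := by
        refine mul_le_mul_right (h1.trans ?_) _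
        exact mul_le_mul_left h2 _
    _ = ENNReal.ofReal (r ^ (2 - (n : ℝ))) *
          (ENNReal.ofReal C * (μR ^ (1/s) * (μR⁻¹ * μr ^ (1 - 1/s)))) * IR := by ring
    _ = _ := by rw [hK]
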